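/- Let p be a prime, n ≥ 1, Γ a complete set of representatives of ℤ^n/pℤ^n containing 0 with Γ' = Γ \ {0}, and Γ* a complete set of representatives of 2π((p^{-1}ℤ^n)/ℤ^n) containing 0. Suppose S and U are masks of finitely supported 1-D lowpass filters with dilation p (S(0) = U(0) = 1), and U is interpolatory. Then the two n-D refinement masks C_{n,p}[U] and τ, where τ(ω) := C_{n,p}[S](ω) + (1 − Σ_{γ∈Γ*} C_{n,p}[S](ω+γ) \overline{C_{n,p}[U](ω+γ)}), are biorthogonal with dilation p·I_n: Σ_{γ∈Γ*} \overline{τ(ω+γ)}·C_{n,p}[U](ω+γ) = 1 for every ω ∈ ℝ^n. -/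

import Mathlib

open scoped Real Classical

noncomputable section

/-- `eC x = e^{-ix}` as a complex number. -/
def eC (x : ℝ) : ℂ := Complex.exp (-(Complex.I * (x : ℂ)))

lemma eC_add (x y : ℝ) : eC (x + y) = eC x * eC y := by
  rw [eC, eC, eC, ← Complex.exp_add]; push_cast; ring_nf

lemma eC_int_two_pi (K : ℤ) : eC ((K : ℝ) * (2 * π)) = 1 := by
  rw [eC, show -(Complex.I * (((K : ℝ) * (2 * π) : ℝ) : ℂ)) = (-K : ℤ) * (2 * π * Complex.I) by push_cast; ring]
  exact Complex.exp_int_mul_two_pi_mul_I _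

/-- trig-polynomial functions are 2π-periodic -/
lemma filt_periodic (G : ℤ → ℝ) (c : ℂ) (S : ℝ → ℂ)
    (hS : ∀ ξ : ℝ, S ξ = c * ∑ᶠ K : ℤ, (G K : ℂ) * eC ((K : ℝ) * ξ)) :
    ∀ (ξ : ℝ) (K : ℤ), S (ξ + 2 * π * K) = S ξ := by
  intro ξ K
  rw [hS, hS]
  congr 1
  apply finsum_congr
  intro K'
  congr 1
  rw [show (K' : ℝ) * (ξ + 2 * π * K) = (K' : ℝ) * ξ + ((K' * K : ℤ) : ℝ) * (2 * π) by push_cast; ring,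
    eC_add, eC_int_two_pi, mul_one]

lemma coset_sum_eq {n p : ℕ} [NeZero p]
    (Γs : Finset (Fin n → ℝ))
    (hΓsSub : ∀ γ ∈ Γs, ∃ m : Fin n → ℤ, γ = fun i => 2 * π / p * (m i : ℝ))
    (hΓsRep : ∀ m : Fin n → ℤ, ∃! γ : Fin n → ℝ, γ ∈ Γs ∧
      ∃ l : Fin n → ℤ, (fun i => 2 * π / p * (m i : ℝ)) = γ + (fun i => 2 * π * (l i : ℝ)))
    (F : (Fin n → ℝ) → ℂ)
    (hF : ∀ (x : Fin n → ℝ) (l : Fin n → ℤ), F (x + fun i => 2 * π * (l i : ℝ)) = F x)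
    (ω : Fin n → ℝ) :
    ∑ γ ∈ Γs, F (ω + γ)
      = ∑ c : Fin n → ZMod p, F (ω + fun i => 2 * π / p * (((c i).val : ℤ) : ℝ)) := by
  have hp0 : (p : ℝ) ≠ 0 := Nat.cast_ne_zero.mpr (NeZero.ne p)
  have hπ : (0:ℝ) < π := Real.pi_pos
  set ψ : (Fin n → ZMod p) → (Fin n → ℝ) :=
    fun c => (hΓsRep (fun i => ((c i).val : ℤ))).choose with hψdef
  have hψ : ∀ c, ψ c ∈ Γs ∧ ∃ l : Fin n → ℤ,
      (fun i => 2 * π / p * ((((c i).val : ℤ)) : ℝ)) = ψ c + (fun i => 2 * π * (l i : ℝ)) :=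
    fun c => (hΓsRep (fun i => ((c i).val : ℤ))).choose_spec.1
  have hψu : ∀ (c : Fin n → ZMod p) (γ : Fin n → ℝ), (γ ∈ Γs ∧ ∃ l : Fin n → ℤ,
      (fun i => 2 * π / p * ((((c i).val : ℤ)) : ℝ)) = γ + (fun i => 2 * π * (l i : ℝ))) → γ = ψ c :=
    fun c γ h => (hΓsRep (fun i => ((c i).val : ℤ))).choose_spec.2 γ h
  symm
  apply Finset.sum_bij (i := fun c _ => ψ c)
  · intro c _; exact (hψ c).1
  · -- injectivity
    intro c₁ _ c₂ _ h
    obtain ⟨l₁, hl₁⟩ := (hψ c₁).2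
    obtain ⟨l₂, hl₂⟩ := (hψ c₂).2
    funext i
    apply ZMod.val_injective p
    have e₁ := congrFun hl₁ i
    have e₂ := congrFun hl₂ i
    rw [h] at e₁
    simp only [Pi.add_apply] at e₁ e₂
    -- 2π/p * a = ψ + 2π l₁, 2π/p * b = ψ + 2π l₂
    have key : (((c₁ i).val : ℤ) : ℝ) - ((c₂ i).val : ℤ) = (p : ℝ) * (l₁ i - l₂ i) := by
      have h2π : (2 * π) ≠ 0 := by positivity
      field_simp at e₁ e₂ ⊢
      nlinarith [e₁, e₂, sq_nonneg (π : ℝ)]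
    have keyZ : (((c₁ i).val : ℤ)) - ((c₂ i).val : ℤ) = (p : ℤ) * (l₁ i - l₂ i) := by
      exact_mod_cast key
    have hdvd : (p : ℤ) ∣ (((c₁ i).val : ℤ) - ((c₂ i).val : ℤ)) := ⟨_, keyZ⟩
    have h1 := ZMod.val_lt (c₁ i)
    have h2 := ZMod.val_lt (c₂ i)
    have := Int.eq_zero_of_abs_lt_dvd hdvd (by rw [abs_lt]; constructor <;> push_cast <;> omega)
    omega
  · -- surjectivity
    intro γ hγ
    obtain ⟨m, rfl⟩ := hΓsSub γ hγ
    refine ⟨fun i => ((m i : ZMod p)), Finset.mem_univ _, ?_⟩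
    refine (hψu _ _ ⟨hγ, fun i => -(m i / p), ?_⟩).symm
    funext i
    simp only [Pi.add_apply]
    have hval : ((((m i : ZMod p)).val : ℤ)) = m i % p := ZMod.val_intCast (m i)
    rw [hval]
    have : (m i : ℝ) = ((m i % p : ℤ) : ℝ) + (p : ℝ) * ((m i / p : ℤ) : ℝ) := by
      push_cast [Int.emod_def]; ring
    rw [this]
    push_cast
    field_simp
    ring
  · -- terms agree
    intro c _
    obtain ⟨l, hl⟩ := (hψ c).2
    rw [hl, ← add_assoc, hF]

lemma card_reps {n p : ℕ} [NeZero p] (Γ : Finset (Fin n → ℤ))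
    (hΓ : ∀ k : Fin n → ℤ, ∃! ν : Fin n → ℤ,
      ν ∈ Γ ∧ ∃ m : Fin n → ℤ, k = ν + (p : ℤ) • m) : Γ.card = p ^ n := by
  rw [show p ^ n = Fintype.card (Fin n → ZMod p) by simp [ZMod.card]]
  rw [← Finset.card_univ]
  apply Finset.card_bij (i := fun ν _ => fun i => ((ν i : ZMod p)))
  · intro ν _; exact Finset.mem_univ _
  · intro ν₁ h₁ ν₂ h₂ h
    have hm : ∀ i, ∃ m : ℤ, ν₂ i = ν₁ i + (p : ℤ) * m := by
      intro i
      have := congrFun h i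
      have hd : (p : ℤ) ∣ (ν₂ i - ν₁ i) := by
        have := (ZMod.intCast_eq_intCast_iff _ _ _).mp this
        exact Int.ModEq.dvd this
      obtain ⟨m, hm⟩ := hd
      exact ⟨m, by omega⟩
    choose m hm using hm
    exact ((hΓ ν₂).unique ⟨h₂, 0, by simp⟩ ⟨h₁, m, by funext i; simpa using hm i⟩).symm
  · intro c _
    obtain ⟨ν, ⟨hν, m, hk⟩, _⟩ := hΓ (fun i => ((c i).val : ℤ))
    refine ⟨ν, hν, ?_⟩
    funext i
    have := congrFun hk i
    simp only [Pi.add_apply, Pi.smul_apply, smul_eq_mul] at this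
    have : ((ν i : ZMod p)) = ((((c i).val : ℤ) : ZMod p)) := by
      rw [this]; push_cast; simp
    rw [this]
    push_cast [ZMod.natCast_val, ZMod.cast_id]
    rfl

lemma card_fiber {n p : ℕ} (hn : 1 ≤ n) [Fact p.Prime]
    (ν : Fin n → ZMod p) (hν : ν ≠ 0) (t : ZMod p) :
    (Finset.univ.filter (fun c : Fin n → ZMod p => ∑ i, c i * ν i = t)).card = p ^ (n - 1) := by
  haveI : NeZero p := ⟨Nat.Prime.ne_zero Fact.out⟩
  -- the linear map is surjective
  obtain ⟨j, hj⟩ : ∃ j, ν j ≠ 0 := by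
    by_contra h
    push_neg at h
    exact hν (funext h)
  have hsurj : ∀ s : ZMod p, ∃ c : Fin n → ZMod p, ∑ i, c i * ν i = s := by
    intro s
    refine ⟨Pi.single j (s * (ν j)⁻¹), ?_⟩
    rw [Finset.sum_eq_single j]
    · rw [Pi.single_eq_same, mul_assoc, inv_mul_cancel₀ hj, mul_one]
    · intro b _ hb; rw [Pi.single_eq_of_ne hb, zero_mul]
    · intro h; exact absurd (Finset.mem_univ j) h
  -- all fibers have the same cardinality
  have hsame : ∀ s : ZMod p,
      (Finset.univ.filter (fun c : Fin n → ZMod p => ∑ i, c i * ν i = s)).card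
        = (Finset.univ.filter (fun c : Fin n → ZMod p => ∑ i, c i * ν i = 0)).card := by
    intro s
    obtain ⟨c₀, hc₀⟩ := hsurj s
    apply Finset.card_bij (i := fun c _ => c - c₀)
    · intro c hc
      simp only [Finset.mem_filter, Finset.mem_univ, true_and] at hc ⊢
      simp only [Pi.sub_apply, sub_mul, Finset.sum_sub_distrib, hc, hc₀, sub_self]
    · intro c₁ _ c₂ _ h
      have := congrArg (· + c₀) h
      simpa using this
    · intro d hd
      refine ⟨d + c₀, ?_, by simp⟩
      simp only [Finset.mem_filter, Finset.mem_univ, true_and] at hd ⊢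
      simp only [Pi.add_apply, add_mul, Finset.sum_add_distrib, hd, hc₀, zero_add]
  -- total count
  have htot : ∑ s : ZMod p,
      (Finset.univ.filter (fun c : Fin n → ZMod p => ∑ i, c i * ν i = s)).card = p ^ n := by
    rw [← Finset.card_eq_sum_card_fiberwise (fun c _ => Finset.mem_univ (∑ i, c i * ν i))]
    simp [ZMod.card]
  rw [hsame t]
  have hptot : p * (Finset.univ.filter
      (fun c : Fin n → ZMod p => ∑ i, c i * ν i = 0)).card = p ^ n := by
    rw [← htot]
    rw [Finset.sum_congr rfl (fun s _ => hsame s), Finset.sum_const, Finset.card_univ, ZMod.card,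
      smul_eq_mul]
  have hp1 : 0 < p := Nat.Prime.pos Fact.out
  have hpow : p * p ^ (n - 1) = p ^ n := by
    cases n with
    | zero => omega
    | succ k => rw [pow_succ', Nat.succ_sub_one]
  rw [← hpow] at hptot
  exact Nat.eq_of_mul_eq_mul_left hp1 hptot

theorem primeCosetSum_modified_biorthogonal
    (n : ℕ) (hn : 1 ≤ n) (p : ℕ) (hp : p.Prime)
    (Γ : Finset (Fin n → ℤ)) (hΓ0 : (0 : Fin n → ℤ) ∈ Γ)
    (hΓ : ∀ k : Fin n → ℤ, ∃! ν : Fin n → ℤ,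
      ν ∈ Γ ∧ ∃ m : Fin n → ℤ, k = ν + (p : ℤ) • m)
    (Γs : Finset (Fin n → ℝ)) (hΓs0 : (0 : Fin n → ℝ) ∈ Γs)
    (hΓsSub : ∀ γ ∈ Γs, ∃ m : Fin n → ℤ, γ = fun i => 2 * π / p * (m i : ℝ))
    (hΓsRep : ∀ m : Fin n → ℤ, ∃! γ : Fin n → ℝ, γ ∈ Γs ∧
      ∃ l : Fin n → ℤ, (fun i => 2 * π / p * (m i : ℝ)) = γ + (fun i => 2 * π * (l i : ℝ)))
    (G H : ℤ → ℝ)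
    (hGfin : (Function.support G).Finite) (hHfin : (Function.support H).Finite)
    (S U : ℝ → ℂ)
    (hS : ∀ ξ : ℝ, S ξ = (1 / (p : ℂ)) * ∑ᶠ K : ℤ, (G K : ℂ) * eC ((K : ℝ) * ξ))
    (hU : ∀ ξ : ℝ, U ξ = (1 / (p : ℂ)) * ∑ᶠ K : ℤ, (H K : ℂ) * eC ((K : ℝ) * ξ))
    (hSlow : S 0 = 1) (hUlow : U 0 = 1)
    -- `U` is interpolatory
    (hUint : ∀ ξ : ℝ, ∑ l ∈ Finset.range p, U (ξ + 2 * π * l / p) = 1)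
    (CS CU : (Fin n → ℝ) → ℂ)
    (hCS : ∀ ω : Fin n → ℝ, CS ω = (1 / (((p : ℂ) - 1) * (p : ℂ) ^ (n - 1))) *
      (1 - (p : ℂ) ^ (n - 1) + ∑ ν ∈ Γ.erase 0, S (∑ i, ω i * (ν i : ℝ))))
    (hCU : ∀ ω : Fin n → ℝ, CU ω = (1 / (((p : ℂ) - 1) * (p : ℂ) ^ (n - 1))) *
      (1 - (p : ℂ) ^ (n - 1) + ∑ ν ∈ Γ.erase 0, U (∑ i, ω i * (ν i : ℝ))))
    (τ : (Fin n → ℝ) → ℂ)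
    (hτ : ∀ ω : Fin n → ℝ, τ ω = CS ω +
      (1 - ∑ γ ∈ Γs, CS (ω + γ) * (starRingEnd ℂ) (CU (ω + γ)))) :
    ∀ ω : Fin n → ℝ, ∑ γ ∈ Γs, (starRingEnd ℂ) (τ (ω + γ)) * CU (ω + γ) = 1 := by
  haveI : Fact p.Prime := ⟨hp⟩
  haveI : NeZero p := ⟨hp.ne_zero⟩
  have hp0 : (p : ℝ) ≠ 0 := Nat.cast_ne_zero.mpr hp.ne_zero
  have hSper := filt_periodic G _ S hS
  have hUper := filt_periodic H _ U hU
  -- shifting the argument of the dot products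
  have hdot : ∀ (x : Fin n → ℝ) (a ν : Fin n → ℤ),
      (∑ i, (x i + 2 * π / p * (a i : ℝ)) * (ν i : ℝ))
        = (∑ i, x i * (ν i : ℝ)) + 2 * π / p * ((∑ i, a i * ν i : ℤ) : ℝ) := by
    intro x a ν
    push_cast
    rw [Finset.mul_sum, ← Finset.sum_add_distrib]
    exact Finset.sum_congr rfl fun i _ => by ring
  have hdot2 : ∀ (x : Fin n → ℝ) (l ν : Fin n → ℤ),
      (∑ i, (x i + 2 * π * (l i : ℝ)) * (ν i : ℝ))
        = (∑ i, x i * (ν i : ℝ)) + 2 * π * ((∑ i, l i * ν i : ℤ) : ℝ) := by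
    intro x l ν
    push_cast
    rw [Finset.mul_sum, ← Finset.sum_add_distrib]
    exact Finset.sum_congr rfl fun i _ => by ring
  -- periodicity of the coset sums
  have hCSper : ∀ (x : Fin n → ℝ) (l : Fin n → ℤ),
      CS (x + fun i => 2 * π * (l i : ℝ)) = CS x := by
    intro x l
    rw [hCS, hCS]
    congr 2
    refine Finset.sum_congr rfl fun ν _ => ?_
    simp only [Pi.add_apply]
    rw [hdot2 x l ν, hSper]
  have hCUper : ∀ (x : Fin n → ℝ) (l : Fin n → ℤ),
      CU (x + fun i => 2 * π * (l i : ℝ)) = CU x := by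
    intro x l
    rw [hCU, hCU]
    congr 2
    refine Finset.sum_congr rfl fun ν _ => ?_
    simp only [Pi.add_apply]
    rw [hdot2 x l ν, hUper]
  -- changing representatives mod p does not change the value of a periodic function
  have hL0 : ∀ F : (Fin n → ℝ) → ℂ,
      (∀ (x : Fin n → ℝ) (l : Fin n → ℤ), F (x + fun i => 2 * π * (l i : ℝ)) = F x) →
      ∀ (x : Fin n → ℝ) (a b : Fin n → ℤ), (∀ i, ((a i : ZMod p)) = ((b i : ZMod p))) →
      F (x + fun i => 2 * π / p * (a i : ℝ)) = F (x + fun i => 2 * π / p * (b i : ℝ)) := by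
    intro F hF x a b hab
    have : ∀ i, ∃ l : ℤ, a i = b i + (p : ℤ) * l := by
      intro i
      obtain ⟨l, hl⟩ := (ZMod.intCast_eq_intCast_iff _ _ _).mp (hab i).symm |>.dvd
      exact ⟨l, by omega⟩
    choose l hl using this
    have hx : (x + fun i => 2 * π / p * (a i : ℝ))
        = (x + fun i => 2 * π / p * (b i : ℝ)) + fun i => 2 * π * (l i : ℝ) := by
      funext i
      simp only [Pi.add_apply]
      have : (a i : ℝ) = (b i : ℝ) + (p : ℝ) * (l i : ℝ) := by exact_mod_cast hl i
      rw [this]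
      field_simp
      ring
    rw [hx, hF]
  -- the shift-invariance of coset sums
  have hshift : ∀ F : (Fin n → ℝ) → ℂ,
      (∀ (x : Fin n → ℝ) (l : Fin n → ℤ), F (x + fun i => 2 * π * (l i : ℝ)) = F x) →
      ∀ (ω : Fin n → ℝ), ∀ γ ∈ Γs, ∑ γ' ∈ Γs, F (ω + γ + γ') = ∑ γ' ∈ Γs, F (ω + γ') := by
    intro F hF ω γ hγ
    obtain ⟨m, rfl⟩ := hΓsSub γ hγ
    rw [coset_sum_eq Γs hΓsSub hΓsRep F hF, coset_sum_eq Γs hΓsSub hΓsRep F hF]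
    refine (Fintype.sum_bijective (fun c => (fun j => ((m j : ZMod p))) + c)
      (Equiv.addLeft (fun j => ((m j : ZMod p)))).bijective _ _ fun c => ?_)
    have e1 : (ω + fun i => 2 * π / p * (m i : ℝ)) + (fun i => 2 * π / p * (((c i).val : ℤ) : ℝ))
        = ω + fun i => 2 * π / p * (((m i + ((c i).val : ℤ) : ℤ)) : ℝ) := by
      funext i
      simp only [Pi.add_apply]
      push_cast
      ring
    rw [e1]
    refine hL0 F hF ω _ _ fun i => ?_
    push_cast [ZMod.natCast_val, ZMod.cast_id]
    rfl
  -- the prime coset sum of an interpolatory mask sums to 1 over Γ*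
  have hcard : (Finset.univ : Finset (Fin n → ZMod p)).card = p ^ n := by
    simp [ZMod.card]
  have hΓcard : (Γ.erase 0).card = p ^ n - 1 := by
    rw [Finset.card_erase_of_mem hΓ0, card_reps Γ hΓ]
  have hνbar : ∀ ν ∈ Γ.erase 0, (fun i => ((ν i : ZMod p))) ≠ (0 : Fin n → ZMod p) := by
    intro ν hν h0
    have hνΓ := Finset.mem_of_mem_erase hν
    have hν0 := Finset.ne_of_mem_erase hν
    have hdvd : ∀ i, ∃ m : ℤ, ν i = (p : ℤ) * m := by
      intro i
      exact (ZMod.intCast_zmod_eq_zero_iff_dvd _ _).mp (congrFun h0 i)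
    choose m hm using hdvd
    exact hν0 ((hΓ ν).unique ⟨hνΓ, 0, by simp⟩ ⟨hΓ0, m, by funext i; simpa using hm i⟩)
  have hq : (p : ℂ) ≠ 0 := Nat.cast_ne_zero.mpr hp.ne_zero
  have hq1 : (p : ℂ) - 1 ≠ 0 := sub_ne_zero.mpr (by exact_mod_cast hp.one_lt.ne')
  have hqpow : (p : ℂ) ^ (n - 1) ≠ 0 := pow_ne_zero _ hq
  have hqn : ((p : ℂ)) ^ n = (p : ℂ) ^ (n - 1) * p := by
    cases n with
    | zero => omega
    | succ k => rw [pow_succ, Nat.succ_sub_one]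
  have hCU1 : ∀ ω : Fin n → ℝ, ∑ γ ∈ Γs, CU (ω + γ) = 1 := by
    intro ω
    rw [coset_sum_eq Γs hΓsSub hΓsRep CU hCUper]
    have hterm : ∀ c : Fin n → ZMod p,
        CU (ω + fun i => 2 * π / p * (((c i).val : ℤ) : ℝ))
          = (1 / (((p : ℂ) - 1) * (p : ℂ) ^ (n - 1))) *
            (1 - (p : ℂ) ^ (n - 1) + ∑ ν ∈ Γ.erase 0,
              U ((∑ i, ω i * (ν i : ℝ))
                + 2 * π / p * ((∑ i, ((c i).val : ℤ) * ν i : ℤ) : ℝ))) := by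
      intro c
      rw [hCU]
      congr 2
      refine Finset.sum_congr rfl fun ν _ => ?_
      simp only [Pi.add_apply]
      rw [hdot ω (fun i => ((c i).val : ℤ)) ν]
    rw [Finset.sum_congr rfl fun c _ => hterm c, ← Finset.mul_sum, Finset.sum_add_distrib,
      Finset.sum_const, Finset.sum_comm, hcard]
    have hinner : ∀ ν ∈ Γ.erase 0,
        ∑ c : Fin n → ZMod p, U ((∑ i, ω i * (ν i : ℝ))
            + 2 * π / p * ((∑ i, ((c i).val : ℤ) * ν i : ℤ) : ℝ)) = ((p : ℂ)) ^ (n - 1) := by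
      intro ν hν
      set ξ : ℝ := ∑ i, ω i * (ν i : ℝ) with hξ
      have hKmod : ∀ K : ℤ, U (ξ + 2 * π / p * (K : ℝ))
          = U (ξ + 2 * π * ((((K : ZMod p)).val : ℕ) : ℝ) / p) := by
        intro K
        have hval : ((((K : ZMod p)).val : ℤ)) = K % p := ZMod.val_intCast K
        have harg : ξ + 2 * π / p * (K : ℝ)
            = (ξ + 2 * π * ((((K : ZMod p)).val : ℕ) : ℝ) / p) + 2 * π * ((K / p : ℤ) : ℝ) := by
          have hKsplit : (K : ℝ) = ((K % p : ℤ) : ℝ) + (p : ℝ) * ((K / p : ℤ) : ℝ) := by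
            push_cast [Int.emod_def]; ring
          have hvalR : ((((K : ZMod p)).val : ℕ) : ℝ) = ((K % p : ℤ) : ℝ) := by
            exact_mod_cast congrArg (Int.cast : ℤ → ℝ) hval
          rw [hKsplit, hvalR]
          field_simp
          ring
        rw [harg, hUper]
      have hcast : ∀ c : Fin n → ZMod p,
          (((∑ i, ((c i).val : ℤ) * ν i : ℤ)) : ZMod p) = ∑ i, c i * ((ν i : ZMod p)) := by
        intro c
        push_cast [ZMod.natCast_val, ZMod.cast_id]
        rfl
      calc ∑ c : Fin n → ZMod p, U (ξ + 2 * π / p * ((∑ i, ((c i).val : ℤ) * ν i : ℤ) : ℝ))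
          = ∑ c : Fin n → ZMod p,
              U (ξ + 2 * π * (((∑ i, c i * ((ν i : ZMod p))).val : ℕ) : ℝ) / p) := by
            refine Finset.sum_congr rfl fun c _ => ?_
            rw [hKmod, hcast]
        _ = ∑ t : ZMod p, ∑ c ∈ Finset.univ.filter
              (fun c : Fin n → ZMod p => ∑ i, c i * ((ν i : ZMod p)) = t),
              U (ξ + 2 * π * (((∑ i, c i * ((ν i : ZMod p))).val : ℕ) : ℝ) / p) := by
            rw [Finset.sum_fiberwise_of_maps_to (fun c _ => Finset.mem_univ _)]
        _ = ∑ t : ZMod p, (p ^ (n - 1) : ℕ) • U (ξ + 2 * π * ((t.val : ℕ) : ℝ) / p) := by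
            refine Finset.sum_congr rfl fun t _ => ?_
            rw [Finset.sum_congr rfl (fun c hc => by
              rw [(Finset.mem_filter.mp hc).2]), Finset.sum_const,
              card_fiber hn _ (hνbar ν hν) t]
        _ = (p ^ (n - 1) : ℕ) * ∑ t : ZMod p, U (ξ + 2 * π * ((t.val : ℕ) : ℝ) / p) := by
            rw [← Finset.smul_sum, nsmul_eq_mul]
        _ = ((p : ℂ)) ^ (n - 1) := by
            have hsum1 : ∑ t : ZMod p, U (ξ + 2 * π * ((t.val : ℕ) : ℝ) / p) = 1 := by
              rw [← hUint ξ]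
              apply Finset.sum_bij (i := fun t _ => t.val)
              · intro t _; exact Finset.mem_range.mpr (ZMod.val_lt t)
              · intro a _ b _ h; exact ZMod.val_injective p h
              · intro l hl
                exact ⟨(l : ZMod p), Finset.mem_univ _,
                  ZMod.val_natCast_of_lt (Finset.mem_range.mp hl)⟩
              · intro t _; rfl
            rw [hsum1, mul_one]
            push_cast
            ring
    rw [Finset.sum_congr rfl hinner, Finset.sum_const, hΓcard]
    simp only [nsmul_eq_mul, Nat.cast_sub (Nat.one_le_pow _ _ hp.pos), Nat.cast_pow, Nat.cast_one]
    rw [hqn]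
    field_simp
    ring
  -- final assembly
  intro ω
  have hBshift : ∀ γ ∈ Γs,
      ∑ γ' ∈ Γs, CS (ω + γ + γ') * (starRingEnd ℂ) (CU (ω + γ + γ'))
        = ∑ γ' ∈ Γs, CS (ω + γ') * (starRingEnd ℂ) (CU (ω + γ')) := by
    intro γ hγ
    exact hshift (fun x => CS x * (starRingEnd ℂ) (CU x))
      (fun x l => by rw [hCSper, hCUper]) ω γ hγ
  have key : ∀ γ ∈ Γs, (starRingEnd ℂ) (τ (ω + γ))
      = (starRingEnd ℂ) (CS (ω + γ)) + (1 - (starRingEnd ℂ)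
          (∑ γ' ∈ Γs, CS (ω + γ') * (starRingEnd ℂ) (CU (ω + γ')))) := by
    intro γ hγ
    rw [hτ (ω + γ)]
    rw [show ∑ γ_1 ∈ Γs, CS (ω + γ + γ_1) * (starRingEnd ℂ) (CU (ω + γ + γ_1))
      = ∑ γ' ∈ Γs, CS (ω + γ') * (starRingEnd ℂ) (CU (ω + γ')) from hBshift γ hγ]
    rw [map_add, map_sub, map_one]
  have hconjB : ∑ γ ∈ Γs, (starRingEnd ℂ) (CS (ω + γ)) * CU (ω + γ)
      = (starRingEnd ℂ) (∑ γ' ∈ Γs, CS (ω + γ') * (starRingEnd ℂ) (CU (ω + γ'))) := by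
    rw [map_sum]
    refine Finset.sum_congr rfl fun γ _ => ?_
    rw [map_mul, Complex.conj_conj]
  calc ∑ γ ∈ Γs, (starRingEnd ℂ) (τ (ω + γ)) * CU (ω + γ)
      = ∑ γ ∈ Γs, ((starRingEnd ℂ) (CS (ω + γ)) * CU (ω + γ)
          + (1 - (starRingEnd ℂ)
              (∑ γ' ∈ Γs, CS (ω + γ') * (starRingEnd ℂ) (CU (ω + γ')))) * CU (ω + γ)) := by
        refine Finset.sum_congr rfl fun γ hγ => ?_
        rw [key γ hγ]
        ring
    _ = (starRingEnd ℂ) (∑ γ' ∈ Γs, CS (ω + γ') * (starRingEnd ℂ) (CU (ω + γ')))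
        + (1 - (starRingEnd ℂ)
            (∑ γ' ∈ Γs, CS (ω + γ') * (starRingEnd ℂ) (CU (ω + γ'))))
          * ∑ γ ∈ Γs, CU (ω + γ) := by
        rw [Finset.sum_add_distrib, ← Finset.mul_sum, hconjB]
    _ = 1 := by rw [hCU1 ω]; ring
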